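/- Let φ₁ ∈ W₂^{s₁}(ℝ^d) and φ₂ ∈ W₂^{s₂}(ℝ^d) be measurable functions such that [φ̂ᵢ,φ̂ᵢ]⁰_{sᵢ}(ω)/|φ̂ᵢ(ω)|² = O(|ω|^{2kᵢ}) a.e. near the origin, i = 1,2. Set ψ̂ := φ̂₁·φ̂₂. Then [ψ̂,ψ̂]⁰_{s₁+s₂}(ω)/(|ψ̂(ω)|²|ω|^{2s₁+2s₂}) = O(|ω|^{2(k₁+k₂)−2(s₁+s₂)}) a.e. near the origin. -/

import Mathlib

open MeasureTheory
open scoped ENNReal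

noncomputable def lattPt (d : ℕ) (a : Fin d → ℤ) : EuclideanSpace ℝ (Fin d) :=
  (EuclideanSpace.equiv (Fin d) ℝ).symm fun i => 2 * Real.pi * (a i : ℝ)

/-- The truncated bracket product `[f,f]⁰_s(ω)`. -/
noncomputable def truncBracket (d : ℕ) (s : ℝ) (f : EuclideanSpace ℝ (Fin d) → ℂ)
    (ω : EuclideanSpace ℝ (Fin d)) : ℝ≥0∞ :=
  ∑' a : {a : Fin d → ℤ // a ≠ 0},
    (‖f (ω + lattPt d a)‖₊ : ℝ≥0∞) ^ 2 * (‖ω + lattPt d a‖₊ : ℝ≥0∞) ^ (2 * s)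

private lemma rpowNeTop {x : ℝ≥0∞} {y : ℝ} (hx : x ≠ 0) (h'x : x ≠ ⊤) : x ^ y ≠ ⊤ := by
  simp [ENNReal.rpow_eq_top_iff, hx, h'x]

private lemma rpowNeZero {x : ℝ≥0∞} {y : ℝ} (hx : x ≠ 0) (h'x : x ≠ ⊤) : x ^ y ≠ 0 := by
  simp [ENNReal.rpow_eq_zero_iff, hx, h'x]

/-- if `[φ̂ᵢ,φ̂ᵢ]⁰_{sᵢ}/|φ̂ᵢ|² = O(|·|^{2kᵢ})` a.e. near `0` for
`i = 1,2`, then `ψ̂ := φ̂₁ φ̂₂` satisfies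
`[ψ̂,ψ̂]⁰_{s₁+s₂}/(|ψ̂|² |·|^{2s₁+2s₂}) = O(|·|^{2(k₁+k₂)−2(s₁+s₂)})` a.e. near `0`. -/
theorem conv_provides_sum_of_orders (d : ℕ) (s₁ s₂ k₁ k₂ C₁ C₂ : ℝ)
    (φ1 φ2 : EuclideanSpace ℝ (Fin d) → ℂ)
    (hm1 : Measurable φ1) (hm2 : Measurable φ2)
    (hW1 : ∫⁻ ξ, ENNReal.ofReal ((1 + ‖ξ‖) ^ (2 * s₁)) * (‖φ1 ξ‖₊ : ℝ≥0∞) ^ 2 < ⊤)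
    (hW2 : ∫⁻ ξ, ENNReal.ofReal ((1 + ‖ξ‖) ^ (2 * s₂)) * (‖φ2 ξ‖₊ : ℝ≥0∞) ^ 2 < ⊤)
    (U₁ : Set (EuclideanSpace ℝ (Fin d))) (hU₁ : U₁ ∈ nhds (0 : EuclideanSpace ℝ (Fin d)))
    (h1 : ∀ᵐ ω ∂volume, ω ∈ U₁ →
      truncBracket d s₁ φ1 ω / (‖φ1 ω‖₊ : ℝ≥0∞) ^ 2
        ≤ ENNReal.ofReal C₁ * (‖ω‖₊ : ℝ≥0∞) ^ (2 * k₁))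
    (U₂ : Set (EuclideanSpace ℝ (Fin d))) (hU₂ : U₂ ∈ nhds (0 : EuclideanSpace ℝ (Fin d)))
    (h2 : ∀ᵐ ω ∂volume, ω ∈ U₂ →
      truncBracket d s₂ φ2 ω / (‖φ2 ω‖₊ : ℝ≥0∞) ^ 2
        ≤ ENNReal.ofReal C₂ * (‖ω‖₊ : ℝ≥0∞) ^ (2 * k₂)) :
    ∃ C : ℝ, 0 ≤ C ∧ ∃ U ∈ nhds (0 : EuclideanSpace ℝ (Fin d)),
      ∀ᵐ ω ∂volume, ω ∈ U →
        truncBracket d (s₁ + s₂) (fun x => φ1 x * φ2 x) ω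
            / ((‖φ1 ω * φ2 ω‖₊ : ℝ≥0∞) ^ 2 * (‖ω‖₊ : ℝ≥0∞) ^ (2 * s₁ + 2 * s₂))
          ≤ ENNReal.ofReal C
              * (‖ω‖₊ : ℝ≥0∞) ^ (2 * (k₁ + k₂) - 2 * (s₁ + s₂)) := by
  rcases Nat.eq_zero_or_pos d with hd | hd
  · subst hd
    refine ⟨0, le_refl 0, Set.univ, Filter.univ_mem, Filter.Eventually.of_forall fun ω _ => ?_⟩
    have he : IsEmpty {a : Fin 0 → ℤ // a ≠ 0} :=
      ⟨fun ⟨a, ha⟩ => ha (funext fun i => i.elim0)⟩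
    have hT : truncBracket 0 (s₁ + s₂) (fun x => φ1 x * φ2 x) ω = 0 := by
      rw [truncBracket]; exact tsum_empty
    rw [hT, ENNReal.zero_div]
    exact zero_le
  have : NeZero d := ⟨hd.ne'⟩
  refine ⟨max C₁ 0 * max C₂ 0, mul_nonneg (le_max_right _ _) (le_max_right _ _),
    U₁ ∩ U₂, Filter.inter_mem hU₁ hU₂, ?_⟩
  have hz : ∀ᵐ ω : EuclideanSpace ℝ (Fin d) ∂volume, ω ≠ 0 := by
    rw [ae_iff]
    simpa using measure_singleton (0 : EuclideanSpace ℝ (Fin d))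
  have hz2 : ∀ᵐ ω : EuclideanSpace ℝ (Fin d) ∂volume,
      ∀ a : {a : Fin d → ℤ // a ≠ 0}, ω + lattPt d a ≠ 0 := by
    rw [ae_all_iff]
    intro a
    have hset : {ω : EuclideanSpace ℝ (Fin d) | ¬ ω + lattPt d a ≠ 0} = {-lattPt d a} := by
      ext ω
      simp [add_eq_zero_iff_eq_neg]
    rw [ae_iff, hset]
    exact measure_singleton _
  filter_upwards [h1, h2, hz, hz2] with ω hω1 hω2 hωz hωz2 hU
  -- notation
  set T := truncBracket d (s₁ + s₂) (fun x => φ1 x * φ2 x) ω with hTdef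
  set T₁ := truncBracket d s₁ φ1 ω with hT1def
  set T₂ := truncBracket d s₂ φ2 ω with hT2def
  have hω0 : (‖ω‖₊ : ℝ≥0∞) ≠ 0 := by simpa using hωz
  have hωtop : (‖ω‖₊ : ℝ≥0∞) ≠ ⊤ := ENNReal.coe_ne_top
  -- Cauchy–Schwarz: T ≤ T₁ * T₂
  have hCS : T ≤ T₁ * T₂ := by
    rw [hTdef, hT1def, hT2def, truncBracket, truncBracket, truncBracket]
    have hterm : ∀ a : {a : Fin d → ℤ // a ≠ 0},
        (‖(fun x => φ1 x * φ2 x) (ω + lattPt d a)‖₊ : ℝ≥0∞) ^ 2 *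
          (‖ω + lattPt d a‖₊ : ℝ≥0∞) ^ (2 * (s₁ + s₂))
        = ((‖φ1 (ω + lattPt d a)‖₊ : ℝ≥0∞) ^ 2 * (‖ω + lattPt d a‖₊ : ℝ≥0∞) ^ (2 * s₁)) *
          ((‖φ2 (ω + lattPt d a)‖₊ : ℝ≥0∞) ^ 2 * (‖ω + lattPt d a‖₊ : ℝ≥0∞) ^ (2 * s₂)) := by
      intro a
      have hb0 : (‖ω + lattPt d a‖₊ : ℝ≥0∞) ≠ 0 := by simpa using hωz2 a
      have h2s : (2 : ℝ) * (s₁ + s₂) = 2 * s₁ + 2 * s₂ := by ring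
      rw [h2s, ENNReal.rpow_add _ _ hb0 ENNReal.coe_ne_top]
      simp only [nnnorm_mul, ENNReal.coe_mul]
      ring
    rw [tsum_congr hterm]
    calc (∑' a : {a : Fin d → ℤ // a ≠ 0},
          ((‖φ1 (ω + lattPt d a)‖₊ : ℝ≥0∞) ^ 2 * (‖ω + lattPt d a‖₊ : ℝ≥0∞) ^ (2 * s₁)) *
          ((‖φ2 (ω + lattPt d a)‖₊ : ℝ≥0∞) ^ 2 * (‖ω + lattPt d a‖₊ : ℝ≥0∞) ^ (2 * s₂)))
        ≤ ∑' a : {a : Fin d → ℤ // a ≠ 0},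
          ((‖φ1 (ω + lattPt d a)‖₊ : ℝ≥0∞) ^ 2 * (‖ω + lattPt d a‖₊ : ℝ≥0∞) ^ (2 * s₁)) *
          ∑' b : {a : Fin d → ℤ // a ≠ 0},
            ((‖φ2 (ω + lattPt d b)‖₊ : ℝ≥0∞) ^ 2 * (‖ω + lattPt d b‖₊ : ℝ≥0∞) ^ (2 * s₂)) :=
          ENNReal.tsum_le_tsum fun a => mul_le_mul_right (ENNReal.le_tsum a) _
      _ = _ := ENNReal.tsum_mul_right
  -- rewrite the denominator
  have hden : ((‖φ1 ω * φ2 ω‖₊ : ℝ≥0∞)) ^ 2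
      = (‖φ1 ω‖₊ : ℝ≥0∞) ^ 2 * (‖φ2 ω‖₊ : ℝ≥0∞) ^ 2 := by
    rw [nnnorm_mul, ENNReal.coe_mul, mul_pow]
  rcases eq_or_ne T 0 with hT0 | hT0
  · rw [hT0, ENNReal.zero_div]; exact zero_le
  -- now T ≠ 0, hence T₁ ≠ 0 and T₂ ≠ 0
  have hT12 : T₁ * T₂ ≠ 0 := fun h => hT0 (le_antisymm (h ▸ hCS) zero_le)
  have hT1ne : T₁ ≠ 0 := fun h => hT12 (by rw [h, zero_mul])
  have hT2ne : T₂ ≠ 0 := fun h => hT12 (by rw [h, mul_zero])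
  have hB1top : ((‖φ1 ω‖₊ : ℝ≥0∞)) ^ 2 ≠ ⊤ := by
    exact ENNReal.pow_ne_top ENNReal.coe_ne_top
  have hB2top : ((‖φ2 ω‖₊ : ℝ≥0∞)) ^ 2 ≠ ⊤ := by
    exact ENNReal.pow_ne_top ENNReal.coe_ne_top
  have hM1top : ENNReal.ofReal C₁ * (‖ω‖₊ : ℝ≥0∞) ^ (2 * k₁) ≠ ⊤ :=
    ENNReal.mul_ne_top ENNReal.ofReal_ne_top (rpowNeTop hω0 hωtop)
  have hM2top : ENNReal.ofReal C₂ * (‖ω‖₊ : ℝ≥0∞) ^ (2 * k₂) ≠ ⊤ :=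
    ENNReal.mul_ne_top ENNReal.ofReal_ne_top (rpowNeTop hω0 hωtop)
  have hB1 : ((‖φ1 ω‖₊ : ℝ≥0∞)) ^ 2 ≠ 0 := by
    intro h
    have := hω1 hU.1
    rw [h, ENNReal.div_zero hT1ne] at this
    exact hM1top (top_le_iff.mp this)
  have hB2 : ((‖φ2 ω‖₊ : ℝ≥0∞)) ^ 2 ≠ 0 := by
    intro h
    have := hω2 hU.2
    rw [h, ENNReal.div_zero hT2ne] at this
    exact hM2top (top_le_iff.mp this)
  have hb1 : T₁ ≤ ENNReal.ofReal (max C₁ 0) * (‖ω‖₊ : ℝ≥0∞) ^ (2 * k₁)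
      * ((‖φ1 ω‖₊ : ℝ≥0∞)) ^ 2 := by
    refine (ENNReal.div_le_iff hB1 hB1top).mp ((hω1 hU.1).trans ?_)
    exact mul_le_mul_left (ENNReal.ofReal_le_ofReal (le_max_left _ _)) _
  have hb2 : T₂ ≤ ENNReal.ofReal (max C₂ 0) * (‖ω‖₊ : ℝ≥0∞) ^ (2 * k₂)
      * ((‖φ2 ω‖₊ : ℝ≥0∞)) ^ 2 := by
    refine (ENNReal.div_le_iff hB2 hB2top).mp ((hω2 hU.2).trans ?_)
    exact mul_le_mul_left (ENNReal.ofReal_le_ofReal (le_max_left _ _)) _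
  rw [hden]
  have hNe : (‖φ1 ω‖₊ : ℝ≥0∞) ^ 2 * (‖φ2 ω‖₊ : ℝ≥0∞) ^ 2
      * (‖ω‖₊ : ℝ≥0∞) ^ (2 * s₁ + 2 * s₂) ≠ 0 :=
    mul_ne_zero (mul_ne_zero hB1 hB2) (rpowNeZero hω0 hωtop)
  have hNt : (‖φ1 ω‖₊ : ℝ≥0∞) ^ 2 * (‖φ2 ω‖₊ : ℝ≥0∞) ^ 2
      * (‖ω‖₊ : ℝ≥0∞) ^ (2 * s₁ + 2 * s₂) ≠ ⊤ :=
    ENNReal.mul_ne_top (ENNReal.mul_ne_top hB1top hB2top) (rpowNeTop hω0 hωtop)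
  rw [ENNReal.div_le_iff hNe hNt]
  calc T ≤ T₁ * T₂ := hCS
    _ ≤ (ENNReal.ofReal (max C₁ 0) * (‖ω‖₊ : ℝ≥0∞) ^ (2 * k₁) * ((‖φ1 ω‖₊ : ℝ≥0∞)) ^ 2) *
        (ENNReal.ofReal (max C₂ 0) * (‖ω‖₊ : ℝ≥0∞) ^ (2 * k₂) * ((‖φ2 ω‖₊ : ℝ≥0∞)) ^ 2) :=
      mul_le_mul' hb1 hb2
    _ = ENNReal.ofReal (max C₁ 0 * max C₂ 0) * (‖ω‖₊ : ℝ≥0∞) ^ (2 * (k₁ + k₂) - 2 * (s₁ + s₂)) *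
        ((‖φ1 ω‖₊ : ℝ≥0∞) ^ 2 * (‖φ2 ω‖₊ : ℝ≥0∞) ^ 2 * (‖ω‖₊ : ℝ≥0∞) ^ (2 * s₁ + 2 * s₂)) := by
      rw [ENNReal.ofReal_mul (le_max_right C₁ 0)]
      have hsplit : (‖ω‖₊ : ℝ≥0∞) ^ (2 * k₁) * (‖ω‖₊ : ℝ≥0∞) ^ (2 * k₂)
          = (‖ω‖₊ : ℝ≥0∞) ^ (2 * (k₁ + k₂) - 2 * (s₁ + s₂)) *
            (‖ω‖₊ : ℝ≥0∞) ^ (2 * s₁ + 2 * s₂) := by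
        rw [← ENNReal.rpow_add _ _ hω0 hωtop, ← ENNReal.rpow_add _ _ hω0 hωtop]
        ring_nf
      calc ENNReal.ofReal (max C₁ 0) * (‖ω‖₊ : ℝ≥0∞) ^ (2 * k₁) * ((‖φ1 ω‖₊ : ℝ≥0∞)) ^ 2 *
            (ENNReal.ofReal (max C₂ 0) * (‖ω‖₊ : ℝ≥0∞) ^ (2 * k₂) * ((‖φ2 ω‖₊ : ℝ≥0∞)) ^ 2)
          = ENNReal.ofReal (max C₁ 0) * ENNReal.ofReal (max C₂ 0) *
            ((‖ω‖₊ : ℝ≥0∞) ^ (2 * k₁) * (‖ω‖₊ : ℝ≥0∞) ^ (2 * k₂)) *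
            ((‖φ1 ω‖₊ : ℝ≥0∞) ^ 2 * (‖φ2 ω‖₊ : ℝ≥0∞) ^ 2) := by ring
        _ = _ := by rw [hsplit]; ring
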